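/- For n ≥ 3, let G = K_{n,n} minus a perfect matching. Every resolving set of G contains at least n-1 vertices. -/

import Mathlib

/-- `W` resolves `G`: every vertex is determined by its distance vector to `W`. -/
def Resolves {V : Type*} (G : SimpleGraph V) (W : Set V) : Prop :=
  ∀ u v : V, (∀ w ∈ W, G.dist u w = G.dist v w) → u = v

/-- Metric dimension: minimum cardinality of a (finite) resolving set. -/
noncomputable def metricDim {V : Type*} (G : SimpleGraph V) : ℕ :=
  sInf {k | ∃ W : Set V, W.Finite ∧ W.ncard = k ∧ Resolves G W}

/-- `K_{n,n}` minus a perfect matching: parts `inl i` (the xᵢ) and `inr j` (the yⱼ),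
with `xᵢ ~ yⱼ` iff `i ≠ j`. -/
def matchGraph (n : ℕ) : SimpleGraph (Fin n ⊕ Fin n) where
  Adj u v := match u, v with
    | Sum.inl i, Sum.inr j => i ≠ j
    | Sum.inr j, Sum.inl i => i ≠ j
    | _, _ => False
  symm := ⟨by rintro (i|i) (j|j) h <;> exact h⟩
  loopless := ⟨by rintro (i|i) h <;> exact h⟩

lemma mg_adj_lr {n : ℕ} {i k : Fin n} (h : i ≠ k) :
    (matchGraph n).Adj (Sum.inl i) (Sum.inr k) := h

lemma mg_adj_rl {n : ℕ} {i k : Fin n} (h : i ≠ k) :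
    (matchGraph n).Adj (Sum.inr k) (Sum.inl i) := h

lemma exists_third {n : ℕ} (hn : 3 ≤ n) (i k : Fin n) : ∃ m : Fin n, m ≠ i ∧ m ≠ k := by
  by_contra h
  push_neg at h
  have hsub : (Finset.univ : Finset (Fin n)) ⊆ {i, k} := by
    intro m _
    by_cases hm : m = i
    · simp [hm]
    · simp [h m hm]
  have := Finset.card_le_card hsub
  have h2 : ({i, k} : Finset (Fin n)).card ≤ 2 :=
    (Finset.card_insert_le _ _).trans (by simp)
  simp [Finset.card_univ] at this
  omega

lemma dist_inl_inr {n : ℕ} {i k : Fin n} (h : i ≠ k) :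
    (matchGraph n).dist (Sum.inl i) (Sum.inr k) = 1 :=
  SimpleGraph.dist_eq_one_iff_adj.mpr (mg_adj_lr h)

lemma dist_inl_inl {n : ℕ} (hn : 3 ≤ n) {i k : Fin n} (h : i ≠ k) :
    (matchGraph n).dist (Sum.inl i) (Sum.inl k) = 2 := by
  obtain ⟨m, hmi, hmk⟩ := exists_third hn i k
  let p : (matchGraph n).Walk (Sum.inl i) (Sum.inl k) :=
    SimpleGraph.Walk.cons (mg_adj_lr hmi.symm)
      (SimpleGraph.Walk.cons (mg_adj_rl hmk.symm) SimpleGraph.Walk.nil)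
  have hle : (matchGraph n).dist (Sum.inl i) (Sum.inl k) ≤ 2 := by simpa [p] using SimpleGraph.dist_le p
  have hpos : 0 < (matchGraph n).dist (Sum.inl i) (Sum.inl k) :=
    p.reachable.pos_dist_of_ne (by simp [h])
  have hne1 : (matchGraph n).dist (Sum.inl i) (Sum.inl k) ≠ 1 := by
    intro h1
    exact (SimpleGraph.dist_eq_one_iff_adj.mp h1 : False)
  omega

/-- every resolving set of `K_{n,n}` minus a perfect matching
has at least `n - 1` vertices. -/
theorem stmt3 (n : ℕ) (hn : 3 ≤ n) (W : Set (Fin n ⊕ Fin n))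
    (hW : Resolves (matchGraph n) W) : n - 1 ≤ W.ncard := by
  classical
  set f : Fin n ⊕ Fin n → Fin n := Sum.elim id id with hf
  set S : Set (Fin n) := f '' W with hS
  have hcompl : ∀ i ∈ Sᶜ, ∀ j ∈ Sᶜ, i = j := by
    intro i hi j hj
    by_contra hij
    have key : ∀ w ∈ W, (matchGraph n).dist (Sum.inl i) w = (matchGraph n).dist (Sum.inl j) w := by
      intro w hw
      have hwi : f w ≠ i := fun h => hi ⟨w, hw, h⟩
      have hwj : f w ≠ j := fun h => hj ⟨w, hw, h⟩
      cases w with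
      | inl k =>
        simp only [hf, Sum.elim_inl, id] at hwi hwj
        rw [dist_inl_inl hn (Ne.symm hwi), dist_inl_inl hn (Ne.symm hwj)]
      | inr k =>
        simp only [hf, Sum.elim_inr, id] at hwi hwj
        rw [dist_inl_inr (Ne.symm hwi), dist_inl_inr (Ne.symm hwj)]
    exact hij (Sum.inl.inj (hW _ _ key))
  have hsub : (Sᶜ : Set (Fin n)).Subsingleton := fun i hi j hj => hcompl i hi j hj
  have h1 : (Sᶜ : Set (Fin n)).ncard ≤ 1 := by
    rcases hsub.eq_empty_or_singleton with h | ⟨a, h⟩ <;> simp [h]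
  have h2 : S.ncard + (Sᶜ : Set (Fin n)).ncard = n := by
    rw [Set.ncard_add_ncard_compl S]
    simp
  have h3 : S.ncard ≤ W.ncard := Set.ncard_image_le (Set.toFinite W)
  omega
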